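/- The decomposability condition for an acyclic weighted complete graph g with underlying linear order x₀ → ⋯ → x_l — that there exists an index i such that every edge from x_j (j ≤ i) to x_k (k ≥ i+1) has the same weight as the edge xᵢ → xᵢ₊₁, and the induced subgraphs on {x₀,…,xᵢ} and {xᵢ₊₁,…,x_l} are recursively decomposable — is equivalent to the path condition: for every a,b and every directed path a = a₀ → ⋯ → a_k = b in g, there exists an index i with all edges a_p → a_q (p ≤ i < q) having equal weight. -/

import Mathlib

structure CGraph (A : Type) (n : ℕ) where
  dir : A → A → Prop
  wt : A → A → ℕ
  dir_irrefl : ∀ a, ¬ dir a a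
  dir_total : ∀ a b, a ≠ b → (dir a b ↔ ¬ dir b a)
  wt_symm : ∀ a b, wt a b = wt b a
  wt_irrefl : ∀ a, wt a a = 0
  wt_pos : ∀ a b, a ≠ b → 1 ≤ wt a b
  wt_le_n : ∀ a b, a ≠ b → wt a b ≤ n

def CGraph.Acyclic {A : Type} {n : ℕ} (g : CGraph A n) : Prop :=
  ∀ a b c, g.dir a b → g.dir b c → g.dir a c

/-- Recursive decomposability of (the restriction to a subset `S` of the vertices of) an
acyclic weighted complete graph `g`: either `S` has at most one element, or `S` splits as
`S₁ ∪ S₂` with all edges directed from `S₁` to `S₂` and all of the same weight (so `S₁` is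
an initial segment `{x₀,…,xᵢ}` and `S₂` the complementary final segment of the underlying
linear order, and all cross edges have the weight of the edge `xᵢ → xᵢ₊₁`), with both
parts recursively decomposable. -/
inductive Decomp {A : Type} [DecidableEq A] {n : ℕ} (g : CGraph A n) : Finset A → Prop
  | of_small : ∀ S : Finset A, S.card ≤ 1 → Decomp g S
  | of_split : ∀ S S₁ S₂ : Finset A, S₁.Nonempty → S₂.Nonempty → Disjoint S₁ S₂ →
      S₁ ∪ S₂ = S → (∀ x ∈ S₁, ∀ y ∈ S₂, g.dir x y) →
      (∃ w, ∀ x ∈ S₁, ∀ y ∈ S₂, g.wt x y = w) →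
      Decomp g S₁ → Decomp g S₂ → Decomp g S

namespace S15

variable {A : Type} {n : ℕ}

lemma asymm (g : CGraph A n) {a b : A} (h : g.dir a b) : ¬ g.dir b a := by
  rcases eq_or_ne a b with rfl | hne
  · exact absurd h (g.dir_irrefl a)
  · exact (g.dir_total a b hne).mp h

lemma path_trans (g : CGraph A n) (hg : g.Acyclic) {k : ℕ} (p : Fin (k+2) → A)
    (hp : ∀ j : Fin (k+1), g.dir (p j.castSucc) (p j.succ)) :
    ∀ s t : Fin (k+2), s < t → g.dir (p s) (p t) := by
  suffices H : ∀ d (s t : Fin (k+2)), (t : ℕ) = (s : ℕ) + d + 1 → g.dir (p s) (p t) by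
    intro s t hst
    exact H ((t : ℕ) - (s : ℕ) - 1) s t (by omega)
  intro d
  induction d with
  | zero =>
    intro s t ht
    have hs : (s : ℕ) < k + 1 := by omega
    have := hp ⟨s, hs⟩
    have h1 : (⟨s, hs⟩ : Fin (k+1)).castSucc = s := by ext; simp
    have h2 : (⟨s, hs⟩ : Fin (k+1)).succ = t := by ext; simp; omega
    rwa [h1, h2] at this
  | succ d ih =>
    intro s t ht
    have h1 : (t : ℕ) - 1 < k + 1 := by omega
    have hmid := ih s ⟨(t : ℕ) - 1, by omega⟩ (by simp; omega)
    have := hp ⟨(t : ℕ) - 1, h1⟩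
    have e1 : (⟨(t : ℕ) - 1, h1⟩ : Fin (k+1)).castSucc = (⟨(t : ℕ) - 1, by omega⟩ : Fin (k+2)) := by
      ext; simp
    have e2 : (⟨(t : ℕ) - 1, h1⟩ : Fin (k+1)).succ = t := by ext; simp; omega
    rw [e1, e2] at this
    exact hg _ _ _ hmid this

lemma forward [DecidableEq A] (g : CGraph A n) (hg : g.Acyclic) :
    ∀ S : Finset A, Decomp g S → ∀ (k : ℕ) (p : Fin (k+2) → A),
      (∀ j : Fin (k+1), g.dir (p j.castSucc) (p j.succ)) → (∀ j, p j ∈ S) →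
      ∃ i : Fin (k+1), ∃ w, ∀ s t : Fin (k+2),
        s ≤ i.castSucc → i.succ ≤ t → g.wt (p s) (p t) = w := by
  intro S h
  induction h with
  | of_small S hS =>
    intro k p hp hmem
    exfalso
    have hd := hp 0
    have h01 : p ((0 : Fin (k+1)).castSucc) ≠ p ((0 : Fin (k+1)).succ) := by
      intro he
      rw [he] at hd
      exact g.dir_irrefl _ hd
    have : 1 < S.card := Finset.one_lt_card.mpr ⟨_, hmem _, _, hmem _, h01⟩
    omega
  | of_split S S₁ S₂ h1 h2 hdisj hunion hdir hwex d1 d2 ih1 ih2 =>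
    intro k p hp hmem
    obtain ⟨w, hw⟩ := hwex
    have hdc : ∀ s t : Fin (k+2), s ≤ t → p t ∈ S₁ → p s ∈ S₁ := by
      intro s t hst ht
      rcases eq_or_lt_of_le hst with rfl | hlt
      · exact ht
      · by_contra hs
        have hsS : p s ∈ S₂ := by
          have hm := hmem s
          rw [← hunion, Finset.mem_union] at hm
          tauto
        exact asymm g (path_trans g hg p hp s t hlt) (hdir _ ht _ hsS)
    by_cases hlast : p (Fin.last (k+1)) ∈ S₁
    · exact ih1 k p hp (fun j => hdc j (Fin.last _) (Fin.le_last j) hlast)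
    · by_cases h0 : p 0 ∈ S₁
      · have hex : ∃ m, ∃ hm : m < k + 2, p ⟨m, hm⟩ ∉ S₁ :=
          ⟨k + 1, by omega, by
            have : (⟨k+1, by omega⟩ : Fin (k+2)) = Fin.last (k+1) := rfl
            rw [this]; exact hlast⟩
        set j₀ := Nat.find hex with hj₀def
        obtain ⟨hj₀lt, hj₀⟩ := Nat.find_spec hex
        have hmin : ∀ m (hm : m < k + 2), m < j₀ → p ⟨m, hm⟩ ∈ S₁ := by
          intro m hm hmlt
          by_contra hc
          exact Nat.find_min hex hmlt ⟨hm, hc⟩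
        have hj₀pos : 0 < j₀ := by
          rcases Nat.eq_zero_or_pos j₀ with h | h
          · exfalso; apply hj₀
            have : (⟨j₀, hj₀lt⟩ : Fin (k+2)) = 0 := by ext; simp [h]
            rw [this]; exact h0
          · exact h
        refine ⟨⟨j₀ - 1, by omega⟩, w, ?_⟩
        intro s t hs ht
        have hs' : (s : ℕ) ≤ j₀ - 1 := hs
        have ht' : j₀ ≤ (t : ℕ) := by
          have : j₀ - 1 + 1 ≤ (t : ℕ) := ht
          omega
        have hsS₁ : p s ∈ S₁ := by
          have := hmin s s.isLt (by omega)
          rwa [Fin.eta] at this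
        have htS₂ : p t ∈ S₂ := by
          have hnot : p t ∉ S₁ := by
            intro hc
            exact hj₀ (hdc ⟨j₀, hj₀lt⟩ t (by simpa [Fin.le_def] using ht') hc)
          have hm := hmem t
          rw [← hunion, Finset.mem_union] at hm
          tauto
        exact hw _ hsS₁ _ htS₂
      · refine ih2 k p hp ?_
        intro j
        have hnot : p j ∉ S₁ := fun hj => h0 (hdc 0 j (Fin.zero_le j) hj)
        have hm := hmem j
        rw [← hunion, Finset.mem_union] at hm
        tauto


def rle (g : CGraph A n) (a b : A) : Prop := a = b ∨ g.dir a b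

lemma backward [DecidableEq A] (g : CGraph A n) (hg : g.Acyclic)
    (H : ∀ (k : ℕ) (p : Fin (k + 2) → A),
      (∀ j : Fin (k + 1), g.dir (p j.castSucc) (p j.succ)) →
      ∃ i : Fin (k + 1), ∃ w, ∀ s t : Fin (k + 2),
        s ≤ i.castSucc → i.succ ≤ t → g.wt (p s) (p t) = w) :
    ∀ (m : ℕ) (S : Finset A), S.card ≤ m → Decomp g S := by
  haveI : IsTrans A (rle g) := ⟨by
    rintro a b c (rfl | hab) (rfl | hbc)
    · exact Or.inl rfl
    · exact Or.inr hbc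
    · exact Or.inr hab
    · exact Or.inr (hg _ _ _ hab hbc)⟩
  haveI : IsAntisymm A (rle g) := ⟨by
    rintro a b (rfl | hab) (h | hba)
    · rfl
    · rfl
    · exact h.symm
    · exact absurd hba (asymm g hab)⟩
  haveI : IsTotal A (rle g) := ⟨by
    intro a b
    rcases eq_or_ne a b with rfl | hne
    · exact Or.inl (Or.inl rfl)
    · by_cases h : g.dir a b
      · exact Or.inl (Or.inr h)
      · exact Or.inr (Or.inr ((g.dir_total b a hne.symm).mpr h))⟩
  haveI : DecidableRel (rle g) := Classical.decRel _
  intro m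
  induction m with
  | zero => exact fun S hS => Decomp.of_small S (by omega)
  | succ m ih =>
    intro S hS
    by_cases hsmall : S.card ≤ 1
    · exact Decomp.of_small S hsmall
    push_neg at hsmall
    set L := S.sort (rle g) with hLdef
    have hlen : L.length = S.card := Finset.length_sort _
    have hsorted : L.Pairwise (rle g) := Finset.pairwise_sort _ _
    have hnodup : L.Nodup := Finset.sort_nodup _ _
    have hmemL : ∀ a, a ∈ L ↔ a ∈ S := fun a => Finset.mem_sort _
    set k := S.card - 2 with hk
    have hlen2 : L.length = k + 2 := by omega
    set p : Fin (k+2) → A := fun j => L.get (Fin.cast hlen2.symm j) with hpdef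
    have hgetdir : ∀ a b : Fin L.length, a < b → g.dir (L.get a) (L.get b) := by
      intro a b hab
      have hr := List.Pairwise.rel_get_of_lt hsorted hab
      rcases hr with heq | hd
      · exact absurd ((List.Nodup.get_inj_iff hnodup).mp heq) (Fin.ne_of_lt hab)
      · exact hd
    have hp : ∀ j : Fin (k+1), g.dir (p j.castSucc) (p j.succ) := by
      intro j
      exact hgetdir _ _ (by rw [Fin.lt_def]; simp)
    obtain ⟨i, w, hw⟩ := H k p hp
    set x := p i.castSucc with hxdef
    -- key index characterization
    have hidx : ∀ s : Fin L.length, rle g (L.get s) x ↔ (s : ℕ) ≤ (i : ℕ) := by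
      intro s
      constructor
      · intro hr
        by_contra hgt
        push_neg at hgt
        have hd : g.dir x (L.get s) := by
          apply hgetdir (Fin.cast hlen2.symm i.castSucc) s
          simp [Fin.lt_def]; omega
        rcases hr with heq | hd'
        · have : s = Fin.cast hlen2.symm i.castSucc :=
            (List.Nodup.get_inj_iff hnodup).mp heq
          rw [this] at hgt
          simp at hgt
        · exact asymm g hd hd'
      · intro hle
        rcases eq_or_lt_of_le hle with heq | hlt
        · left
          show L.get s = L.get (Fin.cast hlen2.symm i.castSucc)
          congr 1
          ext; simpa using heq
        · right
          exact hgetdir s (Fin.cast hlen2.symm i.castSucc) (by simp [Fin.lt_def]; omega)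
    set S₁ := S.filter (fun a => rle g a x) with hS₁
    set S₂ := S.filter (fun a => ¬ rle g a x) with hS₂
    have hgetmem : ∀ s : Fin L.length, L.get s ∈ S := fun s => (hmemL _).mp (L.get_mem _)
    have hxS₁ : x ∈ S₁ := by
      rw [hS₁, Finset.mem_filter]
      exact ⟨hgetmem _, Or.inl rfl⟩
    have hyS₂ : p i.succ ∈ S₂ := by
      rw [hS₂, Finset.mem_filter]
      refine ⟨hgetmem _, ?_⟩
      rw [hidx]
      simp
    -- membership gives index bound
    have hmem₁ : ∀ a ∈ S₁, ∃ s : Fin L.length, L.get s = a ∧ (s : ℕ) ≤ (i : ℕ) := by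
      intro a ha
      rw [hS₁, Finset.mem_filter] at ha
      obtain ⟨s, hs⟩ := List.mem_iff_get.mp ((hmemL a).mpr ha.1)
      exact ⟨s, hs, (hidx s).mp (hs ▸ ha.2)⟩
    have hmem₂ : ∀ a ∈ S₂, ∃ t : Fin L.length, L.get t = a ∧ (i : ℕ) + 1 ≤ (t : ℕ) := by
      intro a ha
      rw [hS₂, Finset.mem_filter] at ha
      obtain ⟨t, ht⟩ := List.mem_iff_get.mp ((hmemL a).mpr ha.1)
      refine ⟨t, ht, ?_⟩
      have := ha.2
      rw [← ht, hidx] at this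
      omega
    have hdir : ∀ a ∈ S₁, ∀ b ∈ S₂, g.dir a b := by
      intro a ha b hb
      obtain ⟨s, hsa, hsi⟩ := hmem₁ a ha
      obtain ⟨t, htb, hti⟩ := hmem₂ b hb
      rw [← hsa, ← htb]
      exact hgetdir s t (by rw [Fin.lt_def]; omega)
    have hwt : ∀ a ∈ S₁, ∀ b ∈ S₂, g.wt a b = w := by
      intro a ha b hb
      obtain ⟨s, hsa, hsi⟩ := hmem₁ a ha
      obtain ⟨t, htb, hti⟩ := hmem₂ b hb
      have := hw (Fin.cast hlen2 s) (Fin.cast hlen2 t)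
        (by simp [Fin.le_def]; omega) (by simp [Fin.le_def]; omega)
      have e1 : p (Fin.cast hlen2 s) = a := by
        rw [hpdef]; simpa using hsa
      have e2 : p (Fin.cast hlen2 t) = b := by
        rw [hpdef]; simpa using htb
      rwa [e1, e2] at this
    have hdisj : Disjoint S₁ S₂ := Finset.disjoint_filter_filter_not S S _
    have hunion : S₁ ∪ S₂ = S := Finset.filter_union_filter_not_eq _ S
    have hc₁ : S₁.card ≤ m := by
      have : S₁ ⊂ S := by
        refine Finset.ssubset_iff_of_subset (Finset.filter_subset _ _) |>.mpr ?_
        refine ⟨p i.succ, ?_, ?_⟩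
        · rw [hS₂, Finset.mem_filter] at hyS₂; exact hyS₂.1
        · intro hc
          exact (Finset.disjoint_left.mp hdisj) hc hyS₂
      have := Finset.card_lt_card this
      omega
    have hc₂ : S₂.card ≤ m := by
      have : S₂ ⊂ S := by
        refine Finset.ssubset_iff_of_subset (Finset.filter_subset _ _) |>.mpr ?_
        refine ⟨x, ?_, ?_⟩
        · rw [hS₁, Finset.mem_filter] at hxS₁; exact hxS₁.1
        · intro hc
          exact (Finset.disjoint_left.mp hdisj) hxS₁ hc
      have := Finset.card_lt_card this
      omega
    exact Decomp.of_split S S₁ S₂ ⟨x, hxS₁⟩ ⟨_, hyS₂⟩ hdisj hunion hdir ⟨w, hwt⟩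
      (ih S₁ hc₁) (ih S₂ hc₂)

end S15


/-- for an acyclic weighted complete graph `g` on a finite vertex set, the
recursive decomposability condition is equivalent to the path condition: along every
directed path `a₀ → ⋯ → a_k` there is an index `i` such that all edges `a_p → a_q` with
`p ≤ i < q` have the same weight. -/
theorem statement15 {A : Type} [DecidableEq A] [Fintype A] {n : ℕ}
    (g : CGraph A n) (hg : g.Acyclic) :
    Decomp g Finset.univ ↔
    (∀ (k : ℕ) (p : Fin (k + 2) → A),
      (∀ j : Fin (k + 1), g.dir (p j.castSucc) (p j.succ)) →
      ∃ i : Fin (k + 1), ∃ w, ∀ s t : Fin (k + 2),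
        s ≤ i.castSucc → i.succ ≤ t → g.wt (p s) (p t) = w) := by
  constructor
  · intro hd k p hp
    exact S15.forward g hg Finset.univ hd k p hp (fun j => Finset.mem_univ _)
  · intro H
    exact S15.backward g hg H (Finset.univ.card) Finset.univ le_rfl
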